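/- With r_0(a) = I_1(a)/I_0(a), the second derivative r_0''(a) is strictly negative for all a > 0; i.e., r_0 is strictly concave on (0,∞). -/

import Mathlib

set_option maxHeartbeats 1000000

open Real MeasureTheory intervalIntegral Set Filter Topology

/-- The modified Bessel function of the first kind of integer order `n`,
`I_n(a) = (1/π) ∫_0^π e^{a cos θ} cos(nθ) dθ`. -/
noncomputable def besselI (n : ℕ) (a : ℝ) : ℝ :=
  (1 / π) * ∫ θ in (0 : ℝ)..π, Real.exp (a * Real.cos θ) * Real.cos (n * θ)



lemma besselI_zero_pos (a : ℝ) : 0 < besselI 0 a := by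
  unfold besselI
  have h1 : (0:ℝ) < ∫ θ in (0:ℝ)..π, Real.exp (a * Real.cos θ) * Real.cos ((0:ℕ) * θ) := by
    apply intervalIntegral_pos_of_pos (f := fun θ => Real.exp (a * Real.cos θ) * Real.cos ((0:ℕ) * θ))
    · apply Continuous.intervalIntegrable
      continuity
    · intro x
      simp [Real.exp_pos]
    · exact Real.pi_pos
  positivity

lemma hasDerivAt_besselI (n : ℕ) (a : ℝ) :
    HasDerivAt (besselI n)
      ((1 / π) * ∫ θ in (0:ℝ)..π, Real.cos θ * (Real.exp (a * Real.cos θ) * Real.cos (n * θ))) a := by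
  have key : HasDerivAt (fun x => ∫ θ in (0:ℝ)..π, Real.exp (x * Real.cos θ) * Real.cos (n * θ))
      (∫ θ in (0:ℝ)..π, Real.cos θ * (Real.exp (a * Real.cos θ) * Real.cos (n * θ))) a := by
    have := intervalIntegral.hasDerivAt_integral_of_dominated_loc_of_deriv_le
      (F := fun x θ => Real.exp (x * Real.cos θ) * Real.cos (n * θ))
      (F' := fun x θ => Real.cos θ * (Real.exp (x * Real.cos θ) * Real.cos (n * θ)))
      (x₀ := a) (a := (0:ℝ)) (b := π) (μ := volume)
      (bound := fun _ => Real.exp (|a| + 1))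
      (s := Metric.ball a 1) (Metric.ball_mem_nhds a one_pos)
      ?_ ?_ ?_ ?_ ?_ ?_
    · exact this.2
    · filter_upwards with x
      exact (Continuous.aestronglyMeasurable (by continuity))
    · apply Continuous.intervalIntegrable; continuity
    · exact (Continuous.aestronglyMeasurable (by continuity))
    · filter_upwards with θ _ x hx
      have hxb : |x| ≤ |a| + 1 := by
        have := abs_sub_abs_le_abs_sub x a
        have hd : dist x a < 1 := by simpa [Metric.mem_ball] using hx
        rw [Real.dist_eq] at hd
        linarith
      have h1 : |Real.cos θ| ≤ 1 := Real.abs_cos_le_one θ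
      have h2 : |Real.cos (n*θ)| ≤ 1 := Real.abs_cos_le_one _
      have h3 : Real.exp (x * Real.cos θ) ≤ Real.exp (|a| + 1) := by
        apply Real.exp_le_exp.2
        calc x * Real.cos θ ≤ |x * Real.cos θ| := le_abs_self _
          _ = |x| * |Real.cos θ| := abs_mul _ _
          _ ≤ (|a| + 1) * 1 := by
              apply mul_le_mul hxb h1 (abs_nonneg _) (by positivity)
          _ = |a| + 1 := by ring
      calc ‖Real.cos θ * (Real.exp (x * Real.cos θ) * Real.cos (n * θ))‖
          = |Real.cos θ| * (Real.exp (x * Real.cos θ) * |Real.cos (n*θ)|) := by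
            rw [norm_eq_abs, abs_mul, abs_mul, abs_of_pos (Real.exp_pos _)]
        _ ≤ 1 * (Real.exp (|a| + 1) * 1) := by
            apply mul_le_mul h1 _ (by positivity) one_pos.le
            apply mul_le_mul h3 h2 (abs_nonneg _) (Real.exp_pos _).le
        _ = Real.exp (|a| + 1) := by ring
    · apply Continuous.intervalIntegrable; continuity
    · filter_upwards with θ _ x _
      have h : HasDerivAt (fun y : ℝ => Real.exp (y * Real.cos θ) * Real.cos (n * θ))
          ((Real.exp (x * Real.cos θ) * (1 * Real.cos θ)) * Real.cos (n * θ)) x := by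
        exact (((hasDerivAt_id x).mul_const (Real.cos θ)).exp).mul_const _
      refine h.congr_deriv ?_; ring
  have := key.const_mul (1/π)
  exact this

lemma besselI_one_zero : besselI 1 0 = 0 := by
  unfold besselI
  norm_num





-- integration by parts consequence
lemma parts (x : ℝ) :
    ∫ θ in (0:ℝ)..π, (Real.cos θ - x * Real.sin θ ^ 2) * Real.exp (x * Real.cos θ) = 0 := by
  have h : ∀ θ ∈ Set.uIcc (0:ℝ) π,
      HasDerivAt (fun t => Real.sin t * Real.exp (x * Real.cos t))
        ((Real.cos θ - x * Real.sin θ ^ 2) * Real.exp (x * Real.cos θ)) θ := by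
    intro θ _
    have h1 : HasDerivAt (fun t : ℝ => Real.sin t * Real.exp (x * Real.cos t))
        (Real.cos θ * Real.exp (x * Real.cos θ) +
          Real.sin θ * (Real.exp (x * Real.cos θ) * (x * -Real.sin θ))) θ := by
      exact (Real.hasDerivAt_sin θ).mul (((Real.hasDerivAt_cos θ).const_mul x).exp)
    convert h1 using 1; ring
  have := intervalIntegral.integral_eq_sub_of_hasDerivAt h
    (by apply Continuous.intervalIntegrable; continuity)
  simpa using this








lemma hasDerivAt_besselI_zero (a : ℝ) : HasDerivAt (besselI 0) (besselI 1 a) a := by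
  have h := hasDerivAt_besselI 0 a
  convert h using 1
  unfold besselI
  congr 1
  apply intervalIntegral.integral_congr
  intro θ _
  push_cast
  simp [mul_comm]

lemma integral_cos_sq' (a : ℝ) (ha : a ≠ 0) :
    (∫ θ in (0:ℝ)..π, Real.cos θ * (Real.exp (a * Real.cos θ) * Real.cos ((1:ℕ) * θ)))
      = (∫ θ in (0:ℝ)..π, Real.exp (a * Real.cos θ) * Real.cos ((0:ℕ) * θ))
        - (1/a) * ∫ θ in (0:ℝ)..π, Real.exp (a * Real.cos θ) * Real.cos ((1:ℕ) * θ) := by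
  have i1 : IntervalIntegrable (fun θ => Real.cos θ * Real.exp (a * Real.cos θ)) volume 0 π := by
    apply Continuous.intervalIntegrable; continuity
  have i2 : IntervalIntegrable (fun θ => Real.sin θ ^ 2 * Real.exp (a * Real.cos θ)) volume 0 π := by
    apply Continuous.intervalIntegrable; continuity
  have hsplit :
      (∫ θ in (0:ℝ)..π, Real.cos θ * Real.exp (a * Real.cos θ))
        - a * ∫ θ in (0:ℝ)..π, Real.sin θ ^ 2 * Real.exp (a * Real.cos θ) = 0 := by
    have key : (∫ θ in (0:ℝ)..π, Real.cos θ * Real.exp (a * Real.cos θ))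
        - a * ∫ θ in (0:ℝ)..π, Real.sin θ ^ 2 * Real.exp (a * Real.cos θ)
        = ∫ θ in (0:ℝ)..π, (Real.cos θ - a * Real.sin θ ^ 2) * Real.exp (a * Real.cos θ) := by
      rw [← intervalIntegral.integral_const_mul, ← intervalIntegral.integral_sub i1 (by
        apply Continuous.intervalIntegrable; continuity)]
      apply intervalIntegral.integral_congr
      intro θ _; simp only; ring
    rw [key, parts a]
  have hsin :
      (∫ θ in (0:ℝ)..π, Real.sin θ ^ 2 * Real.exp (a * Real.cos θ))
        = (∫ θ in (0:ℝ)..π, Real.exp (a * Real.cos θ))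
          - ∫ θ in (0:ℝ)..π, Real.cos θ ^ 2 * Real.exp (a * Real.cos θ) := by
    rw [← intervalIntegral.integral_sub (by apply Continuous.intervalIntegrable; continuity)
      (by apply Continuous.intervalIntegrable; continuity)]
    apply intervalIntegral.integral_congr
    intro θ _
    have h : Real.sin θ ^ 2 = 1 - Real.cos θ ^ 2 := by
      have := Real.sin_sq_add_cos_sq θ; linarith
    simp only
    rw [h]; ring
  have e1 : (∫ θ in (0:ℝ)..π, Real.cos θ * (Real.exp (a * Real.cos θ) * Real.cos ((1:ℕ) * θ)))
      = ∫ θ in (0:ℝ)..π, Real.cos θ ^ 2 * Real.exp (a * Real.cos θ) := by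
    apply intervalIntegral.integral_congr
    intro θ _; push_cast; rw [one_mul]; ring
  have e2 : (∫ θ in (0:ℝ)..π, Real.exp (a * Real.cos θ) * Real.cos ((0:ℕ) * θ))
      = ∫ θ in (0:ℝ)..π, Real.exp (a * Real.cos θ) := by
    apply intervalIntegral.integral_congr
    intro θ _; push_cast; simp
  have e3 : (∫ θ in (0:ℝ)..π, Real.exp (a * Real.cos θ) * Real.cos ((1:ℕ) * θ))
      = ∫ θ in (0:ℝ)..π, Real.cos θ * Real.exp (a * Real.cos θ) := by
    apply intervalIntegral.integral_congr
    intro θ _; push_cast; rw [one_mul]; ring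
  rw [e1, e2, e3]
  rw [hsin] at hsplit
  have hC : (∫ θ in (0:ℝ)..π, Real.cos θ * Real.exp (a * Real.cos θ))
      = a * ((∫ θ in (0:ℝ)..π, Real.exp (a * Real.cos θ))
        - ∫ θ in (0:ℝ)..π, Real.cos θ ^ 2 * Real.exp (a * Real.cos θ)) := by linarith [hsplit]
  rw [hC, ← mul_assoc, one_div_mul_cancel ha, one_mul]; ring

lemma hasDerivAt_besselI_one (a : ℝ) (ha : a ≠ 0) :
    HasDerivAt (besselI 1) (besselI 0 a - besselI 1 a / a) a := by
  have h := hasDerivAt_besselI 1 a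
  convert h using 1
  unfold besselI
  rw [integral_cos_sq' a ha]
  field_simp

noncomputable def Rf (t : ℝ) : ℝ := besselI 1 t / besselI 0 t

lemma Rf_cont : Continuous Rf := by
  have c1 : Continuous (besselI 1) := by
    have : Differentiable ℝ (besselI 1) := fun x => by
      rcases eq_or_ne x 0 with h | h
      · exact (hasDerivAt_besselI 1 x).differentiableAt
      · exact (hasDerivAt_besselI_one x h).differentiableAt
    exact this.continuous
  have c0 : Continuous (besselI 0) := by
    have : Differentiable ℝ (besselI 0) := fun x => (hasDerivAt_besselI_zero x).differentiableAt
    exact this.continuous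
  exact c1.div c0 (fun x => (besselI_zero_pos x).ne')

lemma hasDerivAt_Rf (a : ℝ) (ha : a ≠ 0) :
    HasDerivAt Rf (1 - Rf a ^ 2 - Rf a / a) a := by
  have h := (hasDerivAt_besselI_one a ha).div (hasDerivAt_besselI_zero a) (besselI_zero_pos a).ne'
  refine h.congr_deriv ?_
  unfold Rf
  have h0 := (besselI_zero_pos a).ne'
  field_simp
  ring




lemma comparison {f g : ℝ → ℝ} {a : ℝ} (ha : 0 < a)
    (hfc : ContinuousOn f (Set.Icc 0 a)) (hgc : ContinuousOn g (Set.Icc 0 a))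
    (hd : ∀ x, 0 < x → x < a → ∃ f' g', HasDerivAt f f' x ∧ HasDerivAt g g' x ∧
        0 < x * (g' - f') + (g x - f x) * (1 + x * (f x + g x))) :
    f a < g a := by
  set F : ℝ → ℝ := fun x => ∫ t in (0:ℝ)..x, (f t + g t) with hF
  set H : ℝ → ℝ := fun x => (g x - f x) * (x * Real.exp (F x)) with hH
  have hInt : IntegrableOn (fun t => f t + g t) (Set.Icc 0 a) volume :=
    (hfc.add hgc).integrableOn_Icc
  have hFc : ContinuousOn F (Set.Icc 0 a) := by
    have h := continuousOn_primitive_interval (a := (0:ℝ)) (b := a) (μ := volume)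
      (f := fun t => f t + g t) (by rwa [Set.uIcc_of_le ha.le])
    rwa [Set.uIcc_of_le ha.le] at h
  have hHc : ContinuousOn H (Set.Icc 0 a) := by
    apply ContinuousOn.mul (hgc.sub hfc)
    exact (continuousOn_id.mul (Real.continuous_exp.comp_continuousOn hFc))
  have hconloc : ContinuousOn (fun t => f t + g t) (Set.Ioo 0 a) := by
    intro x hx
    obtain ⟨f', g', hf', hg', _⟩ := hd x hx.1 hx.2
    exact ((hf'.continuousAt.add hg'.continuousAt)).continuousWithinAt
  have hderiv : ∀ x ∈ interior (Set.Icc (0:ℝ) a), 0 < deriv H x := by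
    intro x hx
    rw [interior_Icc] at hx
    obtain ⟨f', g', hf', hg', hkey⟩ := hd x hx.1 hx.2
    have hFint : IntervalIntegrable (fun t => f t + g t) volume 0 x := by
      rw [intervalIntegrable_iff]
      apply hInt.mono_set
      rw [Set.uIoc_of_le hx.1.le]
      exact (Set.Ioc_subset_Icc_self).trans (Set.Icc_subset_Icc le_rfl hx.2.le)
    have hmeas : StronglyMeasurableAtFilter (fun t => f t + g t) (𝓝 x) :=
      hconloc.stronglyMeasurableAtFilter isOpen_Ioo _ ⟨hx.1, hx.2⟩
    have hFd : HasDerivAt F (f x + g x) x :=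
      intervalIntegral.integral_hasDerivAt_right hFint hmeas
        ((hf'.continuousAt.add hg'.continuousAt))
    have h2 : HasDerivAt (fun y => y * Real.exp (F y))
        (1 * Real.exp (F x) + x * (Real.exp (F x) * (f x + g x))) x :=
      (hasDerivAt_id x).mul hFd.exp
    have h1 : HasDerivAt (fun y => g y - f y) (g' - f') x := hg'.sub hf'
    have hHd : HasDerivAt H
        ((g' - f') * (x * Real.exp (F x)) +
          (g x - f x) * (1 * Real.exp (F x) + x * (Real.exp (F x) * (f x + g x)))) x :=
      h1.mul h2
    rw [hHd.deriv]
    have : (g' - f') * (x * Real.exp (F x)) +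
          (g x - f x) * (1 * Real.exp (F x) + x * (Real.exp (F x) * (f x + g x)))
        = Real.exp (F x) * (x * (g' - f') + (g x - f x) * (1 + x * (f x + g x))) := by ring
    rw [this]
    exact mul_pos (Real.exp_pos _) hkey
  have hmono := strictMonoOn_of_deriv_pos (convex_Icc (0:ℝ) a) hHc hderiv
  have h0a : H 0 < H a := hmono (Set.left_mem_Icc.2 ha.le) (Set.right_mem_Icc.2 ha.le) ha
  have hH0 : H 0 = 0 := by simp [hH]
  rw [hH0] at h0a
  have hapos : 0 < a * Real.exp (F a) := mul_pos ha (Real.exp_pos _)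
  by_contra hcon
  push_neg at hcon
  have : H a ≤ 0 := mul_nonpos_of_nonpos_of_nonneg (by linarith) hapos.le
  linarith




noncomputable def Phi (x : ℝ) : ℝ := (3 + 2*x^2) / (2 + 2*x^2 + 4*x^3)
noncomputable def Wf (x : ℝ) : ℝ := Real.sqrt (x^2 + 3/4 + Phi x)
noncomputable def Uf (x : ℝ) : ℝ := x / (1/2 + Wf x)

lemma D_pos {x : ℝ} (hx : 0 ≤ x) : 0 < 2 + 2*x^2 + 4*x^3 := by positivity

lemma Phi_nonneg {x : ℝ} (hx : 0 ≤ x) : 0 ≤ Phi x := by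
  unfold Phi; positivity

lemma V_pos {x : ℝ} (hx : 0 ≤ x) : 0 < x^2 + 3/4 + Phi x := by
  have := Phi_nonneg hx; positivity

lemma Wf_gt_half {x : ℝ} (hx : 0 ≤ x) : 1/2 < Wf x := by
  unfold Wf
  rw [show (1/2 : ℝ) = Real.sqrt (1/4) by
    rw [show (1/4:ℝ) = (1/2)^2 by norm_num, Real.sqrt_sq (by norm_num)]]
  apply Real.sqrt_lt_sqrt (by norm_num)
  have := Phi_nonneg hx
  nlinarith [sq_nonneg x]

lemma s_pos {x : ℝ} (hx : 0 ≤ x) : 0 < 1/2 + Wf x := by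
  have := Wf_gt_half hx; linarith

lemma Wf_sq {x : ℝ} (hx : 0 ≤ x) : Wf x ^ 2 = x^2 + 3/4 + Phi x :=
  Real.sq_sqrt (V_pos hx).le

lemma PhiD {x : ℝ} (hx : 0 ≤ x) : Phi x * (2 + 2*x^2 + 4*x^3) = 3 + 2*x^2 := by
  unfold Phi; field_simp

lemma Uf_zero : Uf 0 = 0 := by unfold Uf; simp

lemma Uf_contOn {a : ℝ} : ContinuousOn Uf (Set.Icc 0 a) := by
  apply ContinuousOn.div continuousOn_id
  · apply ContinuousOn.add continuousOn_const
    apply Real.continuous_sqrt.comp_continuousOn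
    apply ContinuousOn.add (ContinuousOn.add (by fun_prop) continuousOn_const)
    apply ContinuousOn.div (by fun_prop) (by fun_prop)
    intro x hx
    exact (D_pos hx.1).ne'
  · intro x hx
    exact (s_pos hx.1).ne'

lemma barrier_concl {x w q : ℝ} (hx : 0 < x) (hw : 1/2 < w)
    (key2 : q < 2*(1/2 + w) - (1/2 + w)^2 + x^2) :
    1 - (x/(1/2 + w))^2 - (x/(1/2 + w))/x < (1*(1/2 + w) - q)/(1/2 + w)^2 := by
  have hs : (0:ℝ) < 1/2 + w := by linarith
  rw [lt_div_iff₀ (by positivity)]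
  have lhs_eq : (1 - (x/(1/2 + w))^2 - (x/(1/2 + w))/x) * (1/2 + w)^2
      = (1/2 + w)^2 - x^2 - (1/2 + w) := by
    field_simp
  rw [lhs_eq]
  nlinarith [key2]

lemma Uf_hasDeriv {x : ℝ} (hx : 0 < x) :
    ∃ u', HasDerivAt Uf u' x ∧ 1 - Uf x ^ 2 - Uf x / x < u' := by
  have hx0 : (0:ℝ) ≤ x := hx.le
  have hD := D_pos hx0
  have hV := V_pos hx0
  have hw := Wf_gt_half hx0
  have hwpos : 0 < Wf x := by linarith
  have hs := s_pos hx0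
  have hw2 := Wf_sq hx0
  have hPhiD := PhiD hx0
  -- derivative of Phi
  have hnum : HasDerivAt (fun y : ℝ => 3 + 2*y^2) (4*x) x := by
    have h := ((hasDerivAt_pow 2 x).const_mul (2:ℝ)).const_add (3:ℝ)
    refine h.congr_deriv ?_; ring
  have hden : HasDerivAt (fun y : ℝ => 2 + 2*y^2 + 4*y^3) (4*x + 12*x^2) x := by
    have h := (((hasDerivAt_pow 2 x).const_mul (2:ℝ)).const_add (2:ℝ)).add
      ((hasDerivAt_pow 3 x).const_mul (4:ℝ))
    refine h.congr_deriv ?_; ring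
  have hPhi : HasDerivAt Phi
      ((4*x*(2 + 2*x^2 + 4*x^3) - (3 + 2*x^2)*(4*x + 12*x^2))/(2 + 2*x^2 + 4*x^3)^2) x :=
    hnum.div hden hD.ne'
  set p' := (4*x*(2 + 2*x^2 + 4*x^3) - (3 + 2*x^2)*(4*x + 12*x^2))/(2 + 2*x^2 + 4*x^3)^2 with hp'
  have hInner : HasDerivAt (fun y : ℝ => y^2 + 3/4 + Phi y) (2*x + p') x := by
    have h := ((hasDerivAt_pow 2 x).add_const (3/4 : ℝ)).add hPhi
    refine h.congr_deriv ?_; ring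
  have hWd : HasDerivAt Wf ((2*x + p')/(2 * Wf x)) x := hInner.sqrt hV.ne'
  have hsd : HasDerivAt (fun y : ℝ => 1/2 + Wf y) ((2*x + p')/(2 * Wf x)) x :=
    hWd.const_add _
  have hUd : HasDerivAt Uf
      ((1 * (1/2 + Wf x) - x * ((2*x + p')/(2 * Wf x))) / (1/2 + Wf x)^2) x :=
    (hasDerivAt_id x).div hsd hs.ne'
  refine ⟨_, hUd, ?_⟩
  -- the supersolution inequality
  have hEbound : 2 * Wf x * ((3 + 2*x^2)*(2 + 2*x^2 + 4*x^3))
      < 18 + 36*x^2 + 84*x^3 + 14*x^4 + 48*x^5 + 24*x^6 := by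
    have hL : 0 ≤ 2 * Wf x * ((3 + 2*x^2)*(2 + 2*x^2 + 4*x^3)) := by positivity
    have hsq : (2 * Wf x * ((3 + 2*x^2)*(2 + 2*x^2 + 4*x^3)))^2
        < (18 + 36*x^2 + 84*x^3 + 14*x^4 + 48*x^5 + 24*x^6)^2 := by
      have hDeltaA : (18 + 36*x^2 + 84*x^3 + 14*x^4 + 48*x^5 + 24*x^6)^2
          - (2 * Wf x * ((3 + 2*x^2)*(2 + 2*x^2 + 4*x^3)))^2
          = 144*x^2 + 2160*x^3 + 156*x^4 + 5328*x^5 + 7312*x^6 + 3120*x^7 + 8404*x^8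
            + 4032*x^9 + 1952*x^10 + 2048*x^11 + 320*x^12 := by
        have expand : (2 * Wf x * ((3 + 2*x^2)*(2 + 2*x^2 + 4*x^3)))^2
            = 4 * (Wf x^2) * ((3 + 2*x^2)^2 * (2 + 2*x^2 + 4*x^3)^2) := by ring
        rw [expand, hw2]
        linear_combination (-4*(3 + 2*x^2)^2*(2 + 2*x^2 + 4*x^3)) * hPhiD
      have hpos : (0:ℝ) < 144*x^2 + 2160*x^3 + 156*x^4 + 5328*x^5 + 7312*x^6 + 3120*x^7
          + 8404*x^8 + 4032*x^9 + 1952*x^10 + 2048*x^11 + 320*x^12 := by positivity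
      linarith [hDeltaA, hpos]
    exact lt_of_pow_lt_pow_left₀ 2 (by positivity) hsq
  have key : x * (2*x + p') < 2 * Wf x * (Wf x - Phi x) := by
    have hxp : x * (2*x + p')
        = (2*x^2*(2 + 2*x^2 + 4*x^3)^2 + x*(4*x*(2 + 2*x^2 + 4*x^3)
            - (3 + 2*x^2)*(4*x + 12*x^2)))/(2 + 2*x^2 + 4*x^3)^2 := by
      rw [hp']; field_simp
    rw [hxp, div_lt_iff₀ (by positivity)]
    have expand2 : 2 * Wf x * (Wf x - Phi x) * (2 + 2*x^2 + 4*x^3)^2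
        = 2*((x^2+3/4)*(2 + 2*x^2 + 4*x^3) + (3+2*x^2))*(2 + 2*x^2 + 4*x^3)
          - 2 * Wf x * ((3 + 2*x^2)*(2 + 2*x^2 + 4*x^3)) := by
      linear_combination (2*(2 + 2*x^2 + 4*x^3)^2) * hw2
        + (2*(2 + 2*x^2 + 4*x^3) - 2*Wf x*(2 + 2*x^2 + 4*x^3)) * hPhiD
    rw [expand2]
    nlinarith [hEbound]
  -- now conclude
  have key2 : x * ((2*x + p') / (2 * Wf x)) < 2*(1/2 + Wf x) - (1/2 + Wf x)^2 + x^2 := by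
    rw [mul_div_assoc'] at *
    rw [div_lt_iff₀ (by positivity)]
    have heq : (2*(1/2 + Wf x) - (1/2 + Wf x)^2 + x^2) * (2 * Wf x)
        = 2 * Wf x * (Wf x - Phi x) := by
      linear_combination (-2 * Wf x) * hw2
    rw [heq]; exact key
  exact barrier_concl hx hw key2

lemma oblB {a w : ℝ} (ha : 0 < a) (hw : 0 < w)
    (hw2 : w^2 * (2+2*a^2+4*a^3) = (a^2+3/4)*(2+2*a^2+4*a^3) + (3+2*a^2)) :
    0 < w*(2 + a^2 - 2*a^3) + (4*a^4 - 3*a^3 + 7/2*a^2 - 3) := by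
  have hD : (0:ℝ) < 2+2*a^2+4*a^3 := by positivity
  have hsq : (w*(2+a^2-2*a^3))^2 * (2+2*a^2+4*a^3)
      = ((a^2+3/4)*(2+2*a^2+4*a^3)+(3+2*a^2)) * (2+a^2-2*a^3)^2 := by
    linear_combination ((2+a^2-2*a^3)^2) * hw2
  rcases le_or_gt (4*a^4 - 3*a^3 + 7/2*a^2 - 3) 0 with h1 | h1
  · -- A1 ≤ 0 : small a
    have h9 : a < 9/10 := by
      by_contra hc
      push_neg at hc
      nlinarith [mul_nonneg (mul_nonneg (sub_nonneg.2 hc) (sub_nonneg.2 hc)) (sub_nonneg.2 hc),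
        sq_nonneg (a - 9/10), mul_nonneg (sub_nonneg.2 hc) ha.le, sq_nonneg a]
    have hA2 : 0 < 2 + a^2 - 2*a^3 := by nlinarith [sq_nonneg a, mul_pos ha ha]
    have hDB : 0 < 64*a^2 - 96*a^3 + 100*a^4 + 56*a^5 - 115*a^6 + 118*a^7 - 42*a^8
        - 92*a^9 + 56*a^10 - 48*a^11 := by
      have h1' : 0 < 9/10 - a := by linarith
      nlinarith [mul_pos ha h1', sq_nonneg a, mul_pos (mul_pos ha ha) h1', sq_nonneg (a - 1/2),
        mul_pos ha ha, pow_pos ha 3, pow_pos ha 4, pow_pos ha 5, mul_pos (pow_pos ha 4) h1',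
        mul_pos (pow_pos ha 6) h1', mul_pos (pow_pos ha 8) h1']
    have hgt : (4*a^4-3*a^3+7/2*a^2-3)^2 * (2+2*a^2+4*a^3)
        < (w*(2+a^2-2*a^3))^2 * (2+2*a^2+4*a^3) := by
      rw [hsq]; nlinarith [hDB]
    have h2 : (4*a^4-3*a^3+7/2*a^2-3)^2 < (w*(2+a^2-2*a^3))^2 :=
      (mul_lt_mul_iff_of_pos_right hD).mp hgt
    by_contra hc
    push_neg at hc
    nlinarith [h2, mul_pos hw hA2, hc]
  · rcases le_or_gt (2 + a^2 - 2*a^3) 0 with h2 | h2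
    · have ha1 : 1 ≤ a := by
        by_contra hc
        push_neg at hc
        nlinarith [sq_nonneg a, mul_pos ha ha]
      have ht : (0:ℝ) ≤ 2*a^3 - a^2 - 2 := by linarith
      have hmDB : 0 < 48*a^11 - 56*a^10 + 92*a^9 + 42*a^8 - 118*a^7 + 115*a^6 - 56*a^5
          - 100*a^4 + 96*a^3 - 64*a^2 := by
        nlinarith [mul_nonneg ht (pow_pos ha 8).le, mul_nonneg ht (pow_pos ha 6).le,
          mul_nonneg ht (pow_pos ha 4).le, mul_nonneg (mul_nonneg ht ht) (pow_pos ha 2).le,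
          mul_nonneg (mul_nonneg ht ht) ht, pow_le_pow_left₀ (by norm_num : (0:ℝ) ≤ 1) ha1 2,
          sq_nonneg (a-1), mul_nonneg ht (sub_nonneg.2 ha1)]
      have hgt : (w*(2+a^2-2*a^3))^2 * (2+2*a^2+4*a^3)
          < (4*a^4-3*a^3+7/2*a^2-3)^2 * (2+2*a^2+4*a^3) := by
        rw [hsq]; nlinarith [hmDB]
      have h3 : (w*(2+a^2-2*a^3))^2 < (4*a^4-3*a^3+7/2*a^2-3)^2 :=
        (mul_lt_mul_iff_of_pos_right hD).mp hgt
      by_contra hc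
      push_neg at hc
      nlinarith [h3, h1, hc]
    · nlinarith [mul_pos hw h2]







lemma Rf_pos {a : ℝ} (ha : 0 < a) : 0 < Rf a := by
  have h := comparison (f := fun _ => (0:ℝ)) (g := Rf) ha continuousOn_const
    Rf_cont.continuousOn ?_
  · exact h
  · intro x hx _
    refine ⟨0, 1 - Rf x ^ 2 - Rf x / x, hasDerivAt_const x 0, hasDerivAt_Rf x hx.ne', ?_⟩
    have heq : x * ((1 - Rf x ^ 2 - Rf x / x) - 0) + (Rf x - 0) * (1 + x * (0 + Rf x)) = x := by
      field_simp
      ring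
    rw [heq]; exact hx

lemma Rf_lt_Uf {a : ℝ} (ha : 0 < a) : Rf a < Uf a := by
  apply comparison (f := Rf) (g := Uf) ha Rf_cont.continuousOn Uf_contOn
  intro x hx _
  obtain ⟨u', hu', hsuper⟩ := Uf_hasDeriv hx
  refine ⟨1 - Rf x ^ 2 - Rf x / x, u', hasDerivAt_Rf x hx.ne', hu', ?_⟩
  have heq : x * (u' - (1 - Rf x ^ 2 - Rf x / x)) + (Uf x - Rf x) * (1 + x * (Rf x + Uf x))
      = x * (u' - (1 - Uf x ^ 2 - Uf x / x)) := by
    field_simp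
    ring
  rw [heq]
  exact mul_pos hx (by linarith)

theorem bessel_ratio_strictly_concave (a : ℝ) (ha : 0 < a) :
    deriv (deriv (fun t => besselI 1 t / besselI 0 t)) a < 0 := by
  have hfR : (fun t => besselI 1 t / besselI 0 t) = Rf := rfl
  rw [hfR]
  have hEv : deriv Rf =ᶠ[𝓝 a] (fun t => 1 - Rf t ^ 2 - Rf t / t) := by
    filter_upwards [Ioi_mem_nhds ha] with t ht
    exact (hasDerivAt_Rf t (ne_of_gt ht)).deriv
  rw [hEv.deriv_eq]
  have hR := hasDerivAt_Rf a ha.ne'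
  have h1 : HasDerivAt (fun t => Rf t ^ 2) (2 * Rf a * (1 - Rf a ^ 2 - Rf a / a)) a := by
    have := hR.pow 2
    refine this.congr_deriv ?_
    push_cast
    ring
  have h2 : HasDerivAt (fun t => Rf t / t)
      (((1 - Rf a ^ 2 - Rf a / a) * a - Rf a * 1) / a ^ 2) a :=
    hR.div (hasDerivAt_id a) ha.ne'
  have hD2 : HasDerivAt (fun t => 1 - Rf t ^ 2 - Rf t / t)
      (-(2 * Rf a * (1 - Rf a ^ 2 - Rf a / a))
        - ((1 - Rf a ^ 2 - Rf a / a) * a - Rf a * 1) / a ^ 2) a := by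
    have := (h1.const_sub 1).sub h2
    exact this
  rw [hD2.deriv]
  -- bounds
  have hr := Rf_pos ha
  have hru := Rf_lt_Uf ha
  have hwhalf := Wf_gt_half ha.le
  have hwpos : 0 < Wf a := by linarith
  have hs : (0:ℝ) < 1/2 + Wf a := by linarith
  have hDpos : (0:ℝ) < 2 + 2*a^2 + 4*a^3 := by positivity
  have hw2' : Wf a ^ 2 * (2+2*a^2+4*a^3) = (a^2+3/4)*(2+2*a^2+4*a^3) + (3+2*a^2) := by
    have h := Wf_sq ha.le
    have h2 := PhiD ha.le
    linear_combination (2+2*a^2+4*a^3) * h + h2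
  have hQ3D := oblB ha hwpos hw2'
  have key_eq : ((1/2 + Wf a)^3 + (2*a^2-2)*(1/2 + Wf a)^2 - 3*a^2*(1/2 + Wf a) - 2*a^4)
      * (2+2*a^2+4*a^3)
      = Wf a*(2 + a^2 - 2*a^3) + (4*a^4 - 3*a^3 + 7/2*a^2 - 3) := by
    linear_combination (Wf a + 2*a^2 - 1/2) * hw2'
  have hQ3 : 0 < (1/2 + Wf a)^3 + (2*a^2-2)*(1/2 + Wf a)^2 - 3*a^2*(1/2 + Wf a) - 2*a^4 := by
    by_contra hc
    push_neg at hc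
    nlinarith [key_eq, hQ3D, mul_nonpos_of_nonpos_of_nonneg hc hDpos.le]
  have hPu : 0 < -2*a^2*(Uf a)^3 - 3*a*(Uf a)^2 + (2*a^2-2)*(Uf a) + a := by
    have hUf : Uf a = a / (1/2 + Wf a) := rfl
    have hs3 : (-2*a^2*(Uf a)^3 - 3*a*(Uf a)^2 + (2*a^2-2)*(Uf a) + a) * (1/2 + Wf a)^3
        = a * ((1/2 + Wf a)^3 + (2*a^2-2)*(1/2 + Wf a)^2 - 3*a^2*(1/2 + Wf a) - 2*a^4) := by
      rw [hUf]
      field_simp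
      ring
    have hpos : 0 < (-2*a^2*(Uf a)^3 - 3*a*(Uf a)^2 + (2*a^2-2)*(Uf a) + a) * (1/2 + Wf a)^3 := by
      rw [hs3]; exact mul_pos ha hQ3
    by_contra hc
    push_neg at hc
    nlinarith [hpos, mul_nonpos_of_nonpos_of_nonneg hc (by positivity : (0:ℝ) ≤ (1/2 + Wf a)^3)]
  have hupos : 0 < Uf a := lt_trans hr hru
  have hPr : 0 < -2*a^2*(Rf a)^3 - 3*a*(Rf a)^2 + (2*a^2-2)*(Rf a) + a := by
    have hid : (Uf a) * (-2*a^2*(Rf a)^3 - 3*a*(Rf a)^2 + (2*a^2-2)*(Rf a) + a)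
        = (Uf a - Rf a)*a + Rf a * (-2*a^2*(Uf a)^3 - 3*a*(Uf a)^2 + (2*a^2-2)*(Uf a) + a)
          + Rf a * Uf a * (Uf a - Rf a) * (2*a^2*(Rf a + Uf a) + 3*a) := by
      ring
    have hrhs : 0 < (Uf a - Rf a)*a + Rf a * (-2*a^2*(Uf a)^3 - 3*a*(Uf a)^2 + (2*a^2-2)*(Uf a) + a)
          + Rf a * Uf a * (Uf a - Rf a) * (2*a^2*(Rf a + Uf a) + 3*a) := by
      have t1 : 0 < (Uf a - Rf a)*a := mul_pos (by linarith) ha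
      have t2 : 0 < Rf a * (-2*a^2*(Uf a)^3 - 3*a*(Uf a)^2 + (2*a^2-2)*(Uf a) + a) :=
        mul_pos hr hPu
      have t3 : 0 ≤ Rf a * Uf a * (Uf a - Rf a) * (2*a^2*(Rf a + Uf a) + 3*a) := by
        apply mul_nonneg
        apply mul_nonneg (mul_nonneg hr.le hupos.le) (by linarith)
        nlinarith [hr, hupos, ha]
      linarith
    by_contra hc
    push_neg at hc
    nlinarith [hrhs, hid, mul_nonpos_of_nonneg_of_nonpos hupos.le hc]
  have hfin : -(2 * Rf a * (1 - Rf a ^ 2 - Rf a / a))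
        - ((1 - Rf a ^ 2 - Rf a / a) * a - Rf a * 1) / a ^ 2
      = -((-2*a^2*(Rf a)^3 - 3*a*(Rf a)^2 + (2*a^2-2)*(Rf a) + a) / a^2) := by
    field_simp
    ring
  rw [hfin]
  have := div_pos hPr (by positivity : (0:ℝ) < a^2)
  linarith
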